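/- arXiv:0805.3789 — 8 statements merged into one kernel-verified Lean document; each statement's English description precedes it below -/
import Mathlib

section
/- (Saint-Venant iteration lemma.) Let τ₁ < τ₂ be real numbers, μ : [τ₁,τ₂] → (0,∞) continuous, J : [τ₁,τ₂] → [0,∞) continuously differentiable, and f : [τ₁,τ₂] → [0,∞) nonincreasing. Assume that f(τ) + J(τ) ≤ −(2/μ(τ))·J′(τ) for every τ ∈ [τ₁,τ₂]. Then f(τ₂)·[exp(∫_{τ₁}^{τ₂} μ(s)/2 ds) − 1] + J(τ₂)·exp(∫_{τ₁}^{τ₂} μ(s)/2 ds) ≤ J(τ₁). -/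
open MeasureTheory Filter

/-- Saint-Venant iteration lemma: if `f + J ≤ −(2/μ) J'` on `[τ₁,τ₂]` with `μ > 0` continuous,
`J ≥ 0` continuously differentiable, and `f ≥ 0` nonincreasing, then
`f(τ₂)(e^{∫ μ/2} − 1) + J(τ₂) e^{∫ μ/2} ≤ J(τ₁)`. -/
theorem saint_venant_iteration
    (τ₁ τ₂ : ℝ) (hlt : τ₁ < τ₂)
    (μ J J' f : ℝ → ℝ)
    (hμcont : ContinuousOn μ (Set.Icc τ₁ τ₂))
    (hμpos : ∀ τ ∈ Set.Icc τ₁ τ₂, 0 < μ τ)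
    (hJderiv : ∀ τ ∈ Set.Icc τ₁ τ₂, HasDerivWithinAt J (J' τ) (Set.Icc τ₁ τ₂) τ)
    (hJ'cont : ContinuousOn J' (Set.Icc τ₁ τ₂))
    (hJnn : ∀ τ ∈ Set.Icc τ₁ τ₂, 0 ≤ J τ)
    (hfnn : ∀ τ ∈ Set.Icc τ₁ τ₂, 0 ≤ f τ)
    (hfmono : ∀ a ∈ Set.Icc τ₁ τ₂, ∀ b ∈ Set.Icc τ₁ τ₂, a ≤ b → f b ≤ f a)
    (hineq : ∀ τ ∈ Set.Icc τ₁ τ₂, f τ + J τ ≤ -(2 / μ τ) * J' τ) :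
    f τ₂ * (Real.exp (∫ s in τ₁..τ₂, μ s / 2) - 1) +
      J τ₂ * Real.exp (∫ s in τ₁..τ₂, μ s / 2) ≤ J τ₁ := by
  have hle : τ₁ ≤ τ₂ := hlt.le
  -- continuous extension of μ to ℝ
  set ν : ℝ → ℝ := fun x => μ (Set.projIcc τ₁ τ₂ hle x) with hν
  have hνcont : Continuous ν := by
    apply hμcont.comp_continuous
      (continuous_subtype_val.comp (continuous_projIcc))
    intro x; exact (Set.projIcc τ₁ τ₂ hle x).2
  have hνeq : ∀ x ∈ Set.Icc τ₁ τ₂, ν x = μ x := by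
    intro x hx
    simp [hν, Set.projIcc_of_mem hle hx]
  -- primitive of ν/2
  set H : ℝ → ℝ := fun x => ∫ s in τ₁..x, ν s / 2 with hH
  have hνint : ∀ x : ℝ, IntervalIntegrable (fun s => ν s / 2) volume τ₁ x := by
    intro x; exact (hνcont.div_const 2).intervalIntegrable _ _
  have hHderiv : ∀ x : ℝ, HasDerivAt H (ν x / 2) x := by
    intro x
    exact intervalIntegral.integral_hasDerivAt_right (hνint x)
      ((hνcont.div_const 2).stronglyMeasurable.stronglyMeasurableAtFilter)
      ((hνcont.div_const 2).continuousAt)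
  set c : ℝ := f τ₂ with hc
  set G : ℝ → ℝ := fun x => Real.exp (H x) * (J x + c) with hG
  -- G is antitone on [τ₁, τ₂]
  have hGanti : AntitoneOn G (Set.Icc τ₁ τ₂) := by
    have hJcont : ContinuousOn J (Set.Icc τ₁ τ₂) := fun x hx =>
      (hJderiv x hx).continuousWithinAt
    have hGcont : ContinuousOn G (Set.Icc τ₁ τ₂) := by
      apply ContinuousOn.mul
      · exact (Real.continuous_exp.comp
          (continuous_iff_continuousAt.2 fun x => (hHderiv x).continuousAt)).continuousOn
      · exact hJcont.add continuousOn_const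
    have hint : interior (Set.Icc τ₁ τ₂) = Set.Ioo τ₁ τ₂ := interior_Icc
    have hderivG : ∀ x ∈ Set.Ioo τ₁ τ₂,
        HasDerivAt G (Real.exp (H x) * (ν x / 2 * (J x + c) + J' x)) x := by
      intro x hx
      have hxI : x ∈ Set.Icc τ₁ τ₂ := Set.Ioo_subset_Icc_self hx
      have hJd : HasDerivAt J (J' x) x := by
        apply (hJderiv x hxI).hasDerivAt
        rw [mem_nhds_iff]
        exact ⟨Set.Ioo τ₁ τ₂, Set.Ioo_subset_Icc_self, isOpen_Ioo, hx⟩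
      have hexp : HasDerivAt (fun y => Real.exp (H y))
          (Real.exp (H x) * (ν x / 2)) x := (Real.hasDerivAt_exp (H x)).comp x (hHderiv x)
      have := hexp.mul (hJd.add_const c)
      exact this.congr_deriv (by ring)
    apply antitoneOn_of_deriv_nonpos (convex_Icc τ₁ τ₂) hGcont
    · intro x hx
      rw [hint] at hx
      exact (hderivG x hx).differentiableAt.differentiableWithinAt
    · intro x hx
      rw [hint] at hx
      rw [(hderivG x hx).deriv]
      have hxI : x ∈ Set.Icc τ₁ τ₂ := Set.Ioo_subset_Icc_self hx
      have hμx : 0 < μ x := hμpos x hxI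
      have h1 : f x + J x ≤ -(2 / μ x) * J' x := hineq x hxI
      have h2 : J' x ≤ -(μ x / 2) * (f x + J x) := by
        rw [neg_mul, le_neg]
        have := mul_le_mul_of_nonneg_left h1 (le_of_lt (by positivity : (0:ℝ) < μ x / 2))
        calc μ x / 2 * (f x + J x) ≤ μ x / 2 * (-(2 / μ x) * J' x) := this
          _ = -J' x := by field_simp
      have hcx : c ≤ f x := hfmono x hxI τ₂ (Set.right_mem_Icc.2 hle) hxI.2
      have h3 : ν x / 2 * (J x + c) + J' x ≤ 0 := by
        rw [hνeq x hxI]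
        nlinarith
      have := Real.exp_pos (H x)
      nlinarith
  have hkey : G τ₂ ≤ G τ₁ := hGanti (Set.left_mem_Icc.2 hle) (Set.right_mem_Icc.2 hle) hle
  have hH1 : H τ₁ = 0 := by simp [hH]
  have hH2 : H τ₂ = ∫ s in τ₁..τ₂, μ s / 2 := by
    apply intervalIntegral.integral_congr
    intro x hx
    rw [Set.uIcc_of_le hle] at hx
    show ν x / 2 = μ x / 2
    rw [hνeq x hx]
  rw [hG] at hkey
  simp only [hH1, hH2, Real.exp_zero, one_mul] at hkey
  nlinarith [hkey]
end

section
/- (Decay from a nonlinear differential inequality.) Let r₀ > 0, θ ∈ (0,1), K > 0, let h : (0,r₀] → (0,∞) be continuous and integrable near 0, and set H(r) = ∫_0^r h(s)ds. Let I : (0,r₀] → (0,∞) be continuously differentiable and nonincreasing, and assume I(r) ≤ K·h(r)^{−θ}·(−I′(r))^{θ} for every r ∈ (0,r₀]. Then I(r) ≤ (θ/(1−θ))^{θ/(1−θ)} · K^{1/(1−θ)} · H(r)^{−θ/(1−θ)} for every r ∈ (0,r₀]. In particular, with θ = 2/(q+1) (q > 1) and K = 2c₁·τ^{N(q−1)/(q+1)},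 one gets I(r) ≤ (2/(q−1))^{2/(q−1)}·(2c₁)^{(q+1)/(q−1)}·τ^N·H(r)^{−2/(q−1)}. -/
open MeasureTheory Filter
open scoped Topology

/-- Decay from a nonlinear differential inequality: if a positive nonincreasing `C¹` function
`I` satisfies `I(r) ≤ K h(r)^{−θ} (−I'(r))^{θ}` with `θ ∈ (0,1)`, then
`I(r) ≤ (θ/(1−θ))^{θ/(1−θ)} K^{1/(1−θ)} H(r)^{−θ/(1−θ)}` where `H(r) = ∫₀ʳ h`.
In particular with `θ = 2/(q+1)` and `K = 2c₁ τ^{N(q−1)/(q+1)}` one gets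
`I(r) ≤ (2/(q−1))^{2/(q−1)} (2c₁)^{(q+1)/(q−1)} τ^N H(r)^{−2/(q−1)}`. -/
theorem decay_from_differential_inequality
    (r₀ θ K : ℝ) (hr₀ : 0 < r₀) (hθ : θ ∈ Set.Ioo (0:ℝ) 1) (hK : 0 < K)
    (h : ℝ → ℝ) (hcont : ContinuousOn h (Set.Ioc 0 r₀))
    (hpos : ∀ r ∈ Set.Ioc (0:ℝ) r₀, 0 < h r)
    (hint : IntegrableOn h (Set.Ioc 0 r₀))
    (I I' : ℝ → ℝ)
    (hIderiv : ∀ r ∈ Set.Ioc (0:ℝ) r₀, HasDerivAt I (I' r) r)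
    (hI'cont : ContinuousOn I' (Set.Ioc 0 r₀))
    (hIpos : ∀ r ∈ Set.Ioc (0:ℝ) r₀, 0 < I r)
    (hImono : ∀ a ∈ Set.Ioc (0:ℝ) r₀, ∀ b ∈ Set.Ioc (0:ℝ) r₀, a ≤ b → I b ≤ I a)
    (hineq : ∀ r ∈ Set.Ioc (0:ℝ) r₀, I r ≤ K * h r ^ (-θ) * (-I' r) ^ θ) :
    (∀ r ∈ Set.Ioc (0:ℝ) r₀,
        I r ≤ (θ/(1 - θ)) ^ (θ/(1 - θ)) * K ^ (1/(1 - θ)) *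
          (∫ s in (0:ℝ)..r, h s) ^ (-(θ/(1 - θ))))
    ∧ ∀ (N : ℕ) (q c₁ τ : ℝ), 1 < q → 0 < c₁ → 0 < τ →
        θ = 2/(q + 1) → K = 2 * c₁ * τ ^ ((N : ℝ) * (q - 1)/(q + 1)) →
        ∀ r ∈ Set.Ioc (0:ℝ) r₀,
          I r ≤ (2/(q - 1)) ^ (2/(q - 1)) * (2 * c₁) ^ ((q + 1)/(q - 1)) * τ ^ (N : ℝ) *
            (∫ s in (0:ℝ)..r, h s) ^ (-(2/(q - 1))) := by
  obtain ⟨hθ0, hθ1⟩ := hθ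
  have hθne : θ ≠ 0 := ne_of_gt hθ0
  have h1θ : (0:ℝ) < 1 - θ := by linarith
  have hθ1ne : θ - 1 ≠ 0 := by intro hx; nlinarith [sub_eq_zero.mp hx]
  have h1θne : (1:ℝ) - θ ≠ 0 := ne_of_gt h1θ
  set c : ℝ := ((1 - θ)/θ) * K ^ (-(1/θ)) with hc
  have hcpos : 0 < c := mul_pos (div_pos h1θ hθ0) (Real.rpow_pos_of_pos hK _)
  set e : ℝ := (θ - 1)/θ with he
  -- I' is negative on the interval
  have hI'neg : ∀ r ∈ Set.Ioc (0:ℝ) r₀, I' r < 0 := by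
    intro r hr
    have hI'le : I' r ≤ 0 := by
      have hslope : Tendsto (slope I r) (𝓝[<] r) (𝓝 (I' r)) :=
        ((hasDerivAt_iff_tendsto_slope).1 (hIderiv r hr)).mono_left
          (nhdsWithin_mono _ (fun x hx => ne_of_lt hx))
      refine le_of_tendsto hslope ?_
      have hmem : Set.Ioo (r/2) r ∈ 𝓝[<] r :=
        Ioo_mem_nhdsLT_of_mem ⟨half_lt_self hr.1, le_refl r⟩
      filter_upwards [hmem] with x hx
      have hx1 : x ∈ Set.Ioc (0:ℝ) r₀ :=
        ⟨lt_trans (half_pos hr.1) hx.1, le_trans hx.2.le hr.2⟩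
      have hIr : I r ≤ I x := hImono x hx1 r hr hx.2.le
      have hsl : slope I r x = (I x - I r) / (x - r) := by
        simp [slope, div_eq_inv_mul]
      rw [hsl]
      exact div_nonpos_of_nonneg_of_nonpos (by linarith) (by linarith [hx.2])
    rcases hI'le.lt_or_eq with hlt | heq
    · exact hlt
    · exfalso
      have hb := hineq r hr
      rw [heq] at hb
      simp [Real.zero_rpow hθne] at hb
      linarith [hIpos r hr]
  -- key pointwise differential inequality for G = I ^ e
  have key : ∀ r ∈ Set.Ioc (0:ℝ) r₀, c * h r ≤ I' r * e * I r ^ (e - 1) := by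
    intro r hr
    have Ipos := hIpos r hr
    have hh := hpos r hr
    have hnI' : 0 < -I' r := neg_pos.2 (hI'neg r hr)
    set P : ℝ := K ^ (1/θ) with hP
    have Ppos : 0 < P := Real.rpow_pos_of_pos hK _
    set A : ℝ := I r ^ (1/θ) with hA
    set B : ℝ := I r ^ (e - 1) with hB
    have Apos : 0 < A := Real.rpow_pos_of_pos Ipos _
    have Bpos : 0 < B := Real.rpow_pos_of_pos Ipos _
    have hAB : A * B = 1 := by
      rw [hA, hB, ← Real.rpow_add Ipos, show 1/θ + (e - 1) = 0 by rw [he]; field_simp; ring,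
        Real.rpow_zero]
    have h1 : A ≤ (K * h r ^ (-θ) * (-I' r) ^ θ) ^ (1/θ) :=
      Real.rpow_le_rpow Ipos.le (hineq r hr) (by positivity)
    have hrhs : (K * h r ^ (-θ) * (-I' r) ^ θ) ^ (1/θ) = P * (h r)⁻¹ * (-I' r) := by
      rw [Real.mul_rpow (mul_nonneg hK.le (Real.rpow_nonneg hh.le _))
            (Real.rpow_nonneg hnI'.le _),
        Real.mul_rpow hK.le (Real.rpow_nonneg hh.le _),
        ← Real.rpow_mul hh.le, ← Real.rpow_mul hnI'.le,
        show -θ * (1/θ) = -1 by field_simp, show θ * (1/θ) = 1 by field_simp,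
        Real.rpow_neg_one, Real.rpow_one, hP]
    rw [hrhs] at h1
    have h2 : h r * A ≤ P * (-I' r) := by
      calc h r * A ≤ h r * (P * (h r)⁻¹ * (-I' r)) :=
            mul_le_mul_of_nonneg_left h1 hh.le
        _ = (h r * (h r)⁻¹) * (P * (-I' r)) := by ring
        _ = P * (-I' r) := by rw [mul_inv_cancel₀ hh.ne', one_mul]
    have h3 := mul_le_mul_of_nonneg_right h2 (le_of_lt (mul_pos (inv_pos.2 Ppos) Bpos))
    have l1 : (h r * A) * (P⁻¹ * B) = P⁻¹ * h r := by
      rw [show (h r * A) * (P⁻¹ * B) = (A * B) * (P⁻¹ * h r) by ring, hAB, one_mul]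
    have l2 : (P * (-I' r)) * (P⁻¹ * B) = (-I' r) * B := by
      rw [show (P * (-I' r)) * (P⁻¹ * B) = (P * P⁻¹) * ((-I' r) * B) by ring,
        mul_inv_cancel₀ Ppos.ne', one_mul]
    rw [l1, l2] at h3
    have goal_eq1 : c * h r = ((1 - θ)/θ) * (P⁻¹ * h r) := by
      rw [hc, hP, ← Real.rpow_neg_one (K ^ (1/θ)), ← Real.rpow_mul hK.le,
        show 1/θ * (-1) = -(1/θ) by ring]
      ring
    have goal_eq2 : I' r * e * B = ((1 - θ)/θ) * ((-I' r) * B) := by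
      rw [he]; ring
    rw [goal_eq1, goal_eq2]
    exact mul_le_mul_of_nonneg_left h3 (le_of_lt (div_pos h1θ hθ0))
  -- integrated inequality on [a, b]
  have GFTC : ∀ a ∈ Set.Ioc (0:ℝ) r₀, ∀ b ∈ Set.Ioc (0:ℝ) r₀, a ≤ b →
      c * (∫ s in a..b, h s) ≤ I b ^ e := by
    intro a ha b hb hab
    have hsub : Set.Icc a b ⊆ Set.Ioc 0 r₀ :=
      fun x hx => ⟨lt_of_lt_of_le ha.1 hx.1, le_trans hx.2 hb.2⟩
    have hGderiv : ∀ x ∈ Set.Icc a b,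
        HasDerivAt (fun y => I y ^ e) (I' x * e * I x ^ (e - 1)) x :=
      fun x hx => (hIderiv x (hsub hx)).rpow_const (Or.inl (hIpos x (hsub hx)).ne')
    have hIcont : ContinuousOn I (Set.Icc a b) :=
      fun x hx => ((hIderiv x (hsub hx)).continuousAt).continuousWithinAt
    have hG'cont : ContinuousOn (fun x => I' x * e * I x ^ (e - 1)) (Set.Icc a b) :=
      ((hI'cont.mono hsub).mul continuousOn_const).mul
        (hIcont.rpow_const (fun x hx => Or.inl (hIpos x (hsub hx)).ne'))
    have hGint : IntervalIntegrable (fun x => I' x * e * I x ^ (e - 1)) volume a b :=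
      hG'cont.intervalIntegrable_of_Icc hab
    have hFTC : (∫ x in a..b, I' x * e * I x ^ (e - 1)) = I b ^ e - I a ^ e :=
      intervalIntegral.integral_eq_sub_of_hasDerivAt
        (fun x hx => hGderiv x (by rwa [Set.uIcc_of_le hab] at hx)) hGint
    have hhint2 : IntervalIntegrable h volume a b :=
      (hcont.mono hsub).intervalIntegrable_of_Icc hab
    have hmono : (∫ x in a..b, c * h x) ≤ ∫ x in a..b, I' x * e * I x ^ (e - 1) :=
      intervalIntegral.integral_mono_on hab (hhint2.const_mul c) hGint
        (fun x hx => key x (hsub hx))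
    rw [intervalIntegral.integral_const_mul] at hmono
    have hGa : (0:ℝ) ≤ I a ^ e := Real.rpow_nonneg (hIpos a ha).le _
    rw [hFTC] at hmono
    linarith
  -- limit a → 0⁺
  have main : ∀ r ∈ Set.Ioc (0:ℝ) r₀, c * (∫ s in (0:ℝ)..r, h s) ≤ I r ^ e := by
    intro r hr
    have hintIcc : IntegrableOn h (Set.Icc 0 r₀) :=
      (integrableOn_Icc_iff_integrableOn_Ioc).2 hint
    have hprim : ContinuousOn (fun x => ∫ t in Set.Ioc 0 x, h t) (Set.Icc 0 r₀) :=
      intervalIntegral.continuousOn_primitive hintIcc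
    have hzero : (∫ t in Set.Ioc (0:ℝ) 0, h t) = 0 := by simp
    have t1 : Tendsto (fun a => ∫ t in Set.Ioc (0:ℝ) a, h t) (𝓝[>] (0:ℝ)) (𝓝 0) := by
      have := (hprim 0 ⟨le_refl 0, hr₀.le⟩)
      rw [ContinuousWithinAt, hzero] at this
      exact this.mono_left
        (le_trans (le_of_eq (nhdsWithin_Ioc_eq_nhdsGT hr₀).symm)
          (nhdsWithin_mono _ Set.Ioc_subset_Icc_self))
    have t2 : Tendsto
        (fun a => c * (∫ s in (0:ℝ)..r, h s) - c * ∫ t in Set.Ioc (0:ℝ) a, h t)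
        (𝓝[>] (0:ℝ)) (𝓝 (c * (∫ s in (0:ℝ)..r, h s))) := by
      have h0 : Tendsto (fun a : ℝ => c * ∫ t in Set.Ioc (0:ℝ) a, h t)
          (𝓝[>] (0:ℝ)) (𝓝 (c * 0)) := t1.const_mul c
      have hconst : Tendsto (fun _ : ℝ => c * (∫ s in (0:ℝ)..r, h s))
          (𝓝[>] (0:ℝ)) (𝓝 (c * (∫ s in (0:ℝ)..r, h s))) := tendsto_const_nhds
      have := hconst.sub h0
      simpa using this
    refine le_of_tendsto t2 ?_
    have hmem : Set.Ioo (0:ℝ) r ∈ 𝓝[>] (0:ℝ) :=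
      Ioo_mem_nhdsGT_of_mem ⟨le_refl 0, hr.1⟩
    filter_upwards [hmem] with a ha
    have haI : a ∈ Set.Ioc (0:ℝ) r₀ := ⟨ha.1, le_trans ha.2.le hr.2⟩
    have hi0r : IntervalIntegrable h volume 0 r :=
      (intervalIntegrable_iff_integrableOn_Ioc_of_le hr.1.le).2
        (hint.mono_set (Set.Ioc_subset_Ioc_right hr.2))
    have hi0a : IntervalIntegrable h volume 0 a :=
      (intervalIntegrable_iff_integrableOn_Ioc_of_le ha.1.le).2
        (hint.mono_set (Set.Ioc_subset_Ioc_right haI.2))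
    have hsplit : (∫ s in (0:ℝ)..r, h s) - (∫ s in (0:ℝ)..a, h s) = ∫ s in a..r, h s :=
      intervalIntegral.integral_interval_sub_left hi0r hi0a
    have h0a : (∫ s in (0:ℝ)..a, h s) = ∫ t in Set.Ioc (0:ℝ) a, h t :=
      intervalIntegral.integral_of_le ha.1.le
    have := GFTC a haI r hr ha.2.le
    calc c * (∫ s in (0:ℝ)..r, h s) - c * ∫ t in Set.Ioc (0:ℝ) a, h t
        = c * ((∫ s in (0:ℝ)..r, h s) - (∫ s in (0:ℝ)..a, h s)) := by rw [h0a]; ring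
      _ = c * (∫ s in a..r, h s) := by rw [hsplit]
      _ ≤ I r ^ e := this
  -- part 1
  have part1 : ∀ r ∈ Set.Ioc (0:ℝ) r₀,
      I r ≤ (θ/(1 - θ)) ^ (θ/(1 - θ)) * K ^ (1/(1 - θ)) *
        (∫ s in (0:ℝ)..r, h s) ^ (-(θ/(1 - θ))) := by
    intro r hr
    have Ipos := hIpos r hr
    have hi0r : IntervalIntegrable h volume 0 r :=
      (intervalIntegrable_iff_integrableOn_Ioc_of_le hr.1.le).2
        (hint.mono_set (Set.Ioc_subset_Ioc_right hr.2))
    have hHpos : 0 < ∫ s in (0:ℝ)..r, h s :=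
      intervalIntegral.intervalIntegral_pos_of_pos_on hi0r
        (fun x hx => hpos x ⟨hx.1, le_trans hx.2.le hr.2⟩) hr.1
    set Hr : ℝ := ∫ s in (0:ℝ)..r, h s with hHr
    have hexp : θ/(θ - 1) ≤ 0 :=
      div_nonpos_of_nonneg_of_nonpos hθ0.le (by linarith)
    have h4 : (I r ^ e) ^ (θ/(θ - 1)) ≤ (c * Hr) ^ (θ/(θ - 1)) :=
      Real.rpow_le_rpow_of_nonpos (mul_pos hcpos hHpos) (main r hr) hexp
    have h5 : (I r ^ e) ^ (θ/(θ - 1)) = I r := by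
      rw [← Real.rpow_mul Ipos.le, show e * (θ/(θ - 1)) = 1 by rw [he]; field_simp,
        Real.rpow_one]
    have eneg : θ/(θ - 1) = -(θ/(1 - θ)) := by
      rw [show θ - 1 = -(1 - θ) by ring, div_neg]
    have h6 : (c * Hr) ^ (θ/(θ - 1)) =
        (θ/(1 - θ)) ^ (θ/(1 - θ)) * K ^ (1/(1 - θ)) * Hr ^ (-(θ/(1 - θ))) := by
      rw [Real.mul_rpow hcpos.le hHpos.le, hc,
        Real.mul_rpow (div_pos h1θ hθ0).le (Real.rpow_nonneg hK.le _),
        ← Real.rpow_mul hK.le]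
      have e2 : ((1 - θ)/θ) ^ (θ/(θ - 1)) = (θ/(1 - θ)) ^ (θ/(1 - θ)) := by
        rw [eneg, Real.rpow_neg (div_pos h1θ hθ0).le,
          ← Real.inv_rpow (div_pos h1θ hθ0).le, inv_div]
      have e3 : -(1/θ) * (θ/(θ - 1)) = 1/(1 - θ) := by field_simp; ring
      rw [e2, e3, eneg]
    rw [← h5, ← h6]
    exact h4
  refine ⟨part1, ?_⟩
  intro N q c₁ τ hq hc₁ hτ hθeq hKeq r hr
  have hq1 : (0:ℝ) < q - 1 := by linarith
  have hq2 : (0:ℝ) < q + 1 := by linarith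
  have hb := part1 r hr
  have eθ : θ/(1 - θ) = 2/(q - 1) := by
    rw [hθeq, show 1 - 2/(q + 1) = (q - 1)/(q + 1) by field_simp; ring]
    field_simp
  have e1θ : 1/(1 - θ) = (q + 1)/(q - 1) := by
    rw [hθeq, show 1 - 2/(q + 1) = (q - 1)/(q + 1) by field_simp; ring, one_div_div]
  have eK : K ^ (1/(1 - θ)) = (2*c₁) ^ ((q + 1)/(q - 1)) * τ ^ (N:ℝ) := by
    rw [hKeq, e1θ, Real.mul_rpow (by positivity) (Real.rpow_nonneg hτ.le _),
      ← Real.rpow_mul hτ.le,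
      show (N:ℝ) * (q - 1)/(q + 1) * ((q + 1)/(q - 1)) = (N:ℝ) by field_simp]
  rw [eθ, eK] at hb
  exact le_of_le_of_eq hb (by ring)
end

section
/- Let ω : (0,∞) → (0,∞) be continuous and nondecreasing. Then for every r > 0, ∫_0^r exp(−ω(t)/t) dt ≥ (r² / (ω(r) + 2r)) · exp(−ω(r)/r). -/
open MeasureTheory Filter

/-- Lower bound for the primitive of a degenerate absorption potential: if `ω` is positive,
continuous and nondecreasing on `(0,∞)`, then
`∫₀ʳ e^{−ω(t)/t} dt ≥ (r²/(ω(r)+2r)) e^{−ω(r)/r}` for all `r > 0`. -/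
theorem primitive_lower_bound_exp
    (ω : ℝ → ℝ) (hcont : ContinuousOn ω (Set.Ioi 0))
    (hpos : ∀ t : ℝ, 0 < t → 0 < ω t)
    (hmono : ∀ s t : ℝ, 0 < s → s ≤ t → ω s ≤ ω t) :
    ∀ r : ℝ, 0 < r →
      (r ^ 2 / (ω r + 2 * r)) * Real.exp (-(ω r / r)) ≤
        ∫ t in (0:ℝ)..r, Real.exp (-(ω t / t)) := by
  intro r hr
  set a : ℝ := ω r with ha
  have hapos : 0 < a := hpos r hr
  set I : ℝ := ∫ t in (0:ℝ)..r, Real.exp (-(ω t / t)) with hI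
  set F : ℝ → ℝ := fun t => t ^ 2 / (a + 2 * t) * Real.exp (-(a / t)) with hF
  set g : ℝ → ℝ := fun t =>
    Real.exp (-(a / t)) * ((a ^ 2 + 4 * a * t + 2 * t ^ 2) / (a + 2 * t) ^ 2) with hg
  -- derivative of F on (0,∞)
  have hderiv : ∀ t : ℝ, 0 < t → HasDerivAt F (g t) t := by
    intro t ht
    have hden : a + 2 * t ≠ 0 := by positivity
    have ht0 : t ≠ 0 := ne_of_gt ht
    have h1 : HasDerivAt (fun t : ℝ => t ^ 2 / (a + 2 * t))
        ((2 * t * (a + 2 * t) - t ^ 2 * 2) / (a + 2 * t) ^ 2) t := by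
      have hnum : HasDerivAt (fun t : ℝ => t ^ 2) (2 * t) t := by
        simpa using (hasDerivAt_pow 2 t)
      have hd : HasDerivAt (fun t : ℝ => a + 2 * t) 2 t := by
        simpa using ((hasDerivAt_id t).const_mul (2:ℝ)).const_add a
      exact hnum.div hd hden
    have h2 : HasDerivAt (fun t : ℝ => Real.exp (-(a / t)))
        (Real.exp (-(a / t)) * (a / t ^ 2)) t := by
      have hd : HasDerivAt (fun t : ℝ => -(a / t)) (a / t ^ 2) t := by
        have : HasDerivAt (fun t : ℝ => a / t) (-(a / t ^ 2)) t := by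
          simpa [div_eq_mul_inv, sq] using
            ((hasDerivAt_inv ht0).const_mul a)
        have h := this.neg
        simp only [neg_neg] at h
        exact h
      simpa [mul_comm] using hd.exp
    have : HasDerivAt (fun t : ℝ => t ^ 2 / (a + 2 * t) * Real.exp (-(a / t))) _ t := h1.mul h2
    convert this using 1
    simp only [hg]
    field_simp
    ring
  -- the integrand is interval integrable on [0, r]
  have hcIoc : ContinuousOn (fun t : ℝ => Real.exp (-(ω t / t))) (Set.Ioc 0 r) := by
    apply Real.continuous_exp.comp_continuousOn
    apply ContinuousOn.neg
    apply ContinuousOn.div (hcont.mono (by intro x hx; exact hx.1)) continuousOn_id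
    intro x hx; exact ne_of_gt hx.1
  have hmeasInt : IntervalIntegrable (fun t : ℝ => Real.exp (-(ω t / t))) volume 0 r := by
    rw [intervalIntegrable_iff_integrableOn_Ioc_of_le hr.le]
    apply Integrable.mono' (integrable_const (1:ℝ))
      (hcIoc.aestronglyMeasurable measurableSet_Ioc)
    filter_upwards [ae_restrict_mem measurableSet_Ioc] with t ht
    rw [Real.norm_eq_abs, abs_of_pos (Real.exp_pos _)]
    apply Real.exp_le_one_iff.mpr
    have := hpos t ht.1
    have := ht.1
    nlinarith [div_pos (hpos t ht.1) ht.1]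
  -- key estimate for each ε ∈ (0, r)
  have key : ∀ ε : ℝ, ε ∈ Set.Ioo 0 r → F r - F ε ≤ I := by
    intro ε hε
    obtain ⟨hε0, hεr⟩ := hε
    have hIcc : ∀ t ∈ Set.Icc ε r, 0 < t := fun t ht => lt_of_lt_of_le hε0 ht.1
    have hcg : ContinuousOn g (Set.Icc ε r) := by
      apply ContinuousOn.mul
      · apply Real.continuous_exp.comp_continuousOn
        apply ContinuousOn.neg
        apply ContinuousOn.div continuousOn_const continuousOn_id
        intro x hx; exact ne_of_gt (hIcc x hx)
      · apply ContinuousOn.div (by fun_prop) (by fun_prop)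
        intro x hx
        have := hIcc x hx
        positivity
    have hgInt : IntervalIntegrable g volume ε r := by
      apply ContinuousOn.intervalIntegrable
      rwa [Set.uIcc_of_le hεr.le]
    have hcexp : ContinuousOn (fun t : ℝ => Real.exp (-(a / t))) (Set.Icc ε r) := by
      apply Real.continuous_exp.comp_continuousOn
      apply ContinuousOn.neg
      apply ContinuousOn.div continuousOn_const continuousOn_id
      intro x hx; exact ne_of_gt (hIcc x hx)
    have hexpInt : IntervalIntegrable (fun t : ℝ => Real.exp (-(a / t))) volume ε r := by
      apply ContinuousOn.intervalIntegrable
      rwa [Set.uIcc_of_le hεr.le]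
    have hwInt : IntervalIntegrable (fun t : ℝ => Real.exp (-(ω t / t))) volume ε r := by
      apply hmeasInt.mono_set
      rw [Set.uIcc_of_le hεr.le, Set.uIcc_of_le hr.le]
      exact Set.Icc_subset_Icc hε0.le le_rfl
    -- FTC
    have hftc : ∫ t in ε..r, g t = F r - F ε := by
      apply intervalIntegral.integral_eq_sub_of_hasDerivAt
      · intro t ht
        rw [Set.uIcc_of_le hεr.le] at ht
        exact hderiv t (hIcc t ht)
      · exact hgInt
    -- g ≤ exp(-(a/t)) on [ε, r]
    have hg_le : ∫ t in ε..r, g t ≤ ∫ t in ε..r, Real.exp (-(a / t)) := by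
      apply intervalIntegral.integral_mono_on hεr.le hgInt hexpInt
      intro t ht
      have ht0 := hIcc t ht
      have hfrac : (a ^ 2 + 4 * a * t + 2 * t ^ 2) / (a + 2 * t) ^ 2 ≤ 1 := by
        rw [div_le_one (by positivity)]
        nlinarith
      calc g t ≤ Real.exp (-(a / t)) * 1 := by
            apply mul_le_mul_of_nonneg_left hfrac (Real.exp_pos _).le
        _ = Real.exp (-(a / t)) := by ring
    -- exp(-(a/t)) ≤ exp(-(ω t / t)) on [ε, r]
    have hexp_le : ∫ t in ε..r, Real.exp (-(a / t)) ≤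
        ∫ t in ε..r, Real.exp (-(ω t / t)) := by
      apply intervalIntegral.integral_mono_on hεr.le hexpInt hwInt
      intro t ht
      have ht0 := hIcc t ht
      apply Real.exp_le_exp.mpr
      have : ω t ≤ a := hmono t r ht0 ht.2
      have h2 : ω t / t ≤ a / t := by gcongr
      linarith
    -- ∫_ε^r ≤ ∫_0^r
    have hsplit : ∫ t in ε..r, Real.exp (-(ω t / t)) ≤ I := by
      have h0ε : IntervalIntegrable (fun t : ℝ => Real.exp (-(ω t / t))) volume 0 ε := by
        apply hmeasInt.mono_set
        rw [Set.uIcc_of_le hε0.le, Set.uIcc_of_le hr.le]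
        exact Set.Icc_subset_Icc le_rfl hεr.le
      have hadd := intervalIntegral.integral_add_adjacent_intervals h0ε hwInt
      have hnn : 0 ≤ ∫ t in (0:ℝ)..ε, Real.exp (-(ω t / t)) := by
        apply intervalIntegral.integral_nonneg hε0.le
        intro t _; exact (Real.exp_pos _).le
      rw [hI]
      linarith [hadd]
    linarith [hftc, hg_le, hexp_le, hsplit]
  -- take limit ε → 0⁺ : F ε → 0
  have hFlim : Tendsto F (nhdsWithin 0 (Set.Ioi 0)) (nhds 0) := by
    have hsq : ∀ ε ∈ Set.Ioi (0:ℝ), F ε ≤ ε ^ 2 / a := by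
      intro ε hε
      have hε0 : (0:ℝ) < ε := hε
      have h1 : Real.exp (-(a / ε)) ≤ 1 := by
        apply Real.exp_le_one_iff.mpr
        have := div_pos hapos hε0
        linarith
      calc F ε ≤ ε ^ 2 / (a + 2 * ε) * 1 := by
            apply mul_le_mul_of_nonneg_left h1 (by positivity)
        _ = ε ^ 2 / (a + 2 * ε) := by ring
        _ ≤ ε ^ 2 / a := by
            apply div_le_div_of_nonneg_left (by positivity) hapos (by linarith)
    have hnn : ∀ ε ∈ Set.Ioi (0:ℝ), 0 ≤ F ε := by
      intro ε hε
      have hε0 : (0:ℝ) < ε := hε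
      have : 0 < Real.exp (-(a / ε)) := Real.exp_pos _
      positivity
    have hub : Tendsto (fun ε : ℝ => ε ^ 2 / a) (nhdsWithin 0 (Set.Ioi 0)) (nhds 0) := by
      have : Tendsto (fun ε : ℝ => ε ^ 2 / a) (nhds 0) (nhds 0) := by
        have := (continuous_pow 2 (M := ℝ)).div_const a
        simpa using this.tendsto 0
      exact this.mono_left nhdsWithin_le_nhds
    apply squeeze_zero' (eventually_nhdsWithin_of_forall hnn)
      (eventually_nhdsWithin_of_forall hsq) hub
  have hmem : ∀ᶠ ε in nhdsWithin (0:ℝ) (Set.Ioi 0), F r ≤ I + F ε := by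
    filter_upwards [eventually_mem_nhdsWithin,
      eventually_nhdsWithin_of_eventually_nhds (eventually_lt_nhds hr)] with ε h1 h2
    have := key ε ⟨h1, h2⟩
    linarith
  have hlim : Tendsto (fun ε : ℝ => I + F ε) (nhdsWithin 0 (Set.Ioi 0)) (nhds (I + 0)) :=
    tendsto_const_nhds.add hFlim
  have hfinal : F r ≤ I + 0 := ge_of_tendsto hlim hmem
  have : F r = (r ^ 2 / (ω r + 2 * r)) * Real.exp (-(ω r / r)) := by rw [hF]
  linarith [hfinal, this.symm.le]
end

section
/- Let ω : (0,∞) → (0,∞) be continuous and nondecreasing. Then for every r > 0, ∫_0^r exp(−exp(ω(t)/t)) dt ≥ (r² / (2ω(r) + 2r)) · exp(−ω(r)/r) · exp(−exp(ω(r)/r)). -/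
open MeasureTheory Filter

private lemma exp_neg_exp_anti {x y : ℝ} (h : x ≤ y) :
    Real.exp (-Real.exp y) ≤ Real.exp (-Real.exp x) :=
  Real.exp_le_exp.2 (neg_le_neg (Real.exp_le_exp.2 h))

private lemma contOn_phi (b : ℝ) {s : Set ℝ} (hs : ∀ x ∈ s, x ≠ 0) :
    ContinuousOn (fun t : ℝ => Real.exp (-Real.exp (b / t))) s := by
  apply Real.continuous_exp.comp_continuousOn
  apply ContinuousOn.neg
  apply Real.continuous_exp.comp_continuousOn
  exact ContinuousOn.div continuousOn_const continuousOn_id hs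

/-- The comparison-function (FTC) step : on `[ε, r]` the function
`G(t) = t²/(2b+2t) · exp(−b/t − e^{b/t})` has derivative `≤ exp(−e^{b/t})`. -/
private lemma aux_fto (b : ℝ) (hb : 0 < b) {ε r : ℝ} (hε : 0 < ε) (hεr : ε ≤ r) :
    r ^ 2 / (2 * b + 2 * r) * Real.exp (-(b / r) - Real.exp (b / r))
      - ε ^ 2 / (2 * b + 2 * ε) * Real.exp (-(b / ε) - Real.exp (b / ε))
    ≤ ∫ t in ε..r, Real.exp (-Real.exp (b / t)) := by
  set G : ℝ → ℝ := fun t => t ^ 2 / (2 * b + 2 * t) * Real.exp (-(b / t) - Real.exp (b / t))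
    with hGdef
  set g : ℝ → ℝ := fun t =>
    ((4 * b * t + 2 * t ^ 2) / (2 * b + 2 * t) ^ 2
        + t ^ 2 / (2 * b + 2 * t) * (b / t ^ 2) * (1 + Real.exp (b / t)))
      * Real.exp (-(b / t) - Real.exp (b / t)) with hgdef
  have huIcc : Set.uIcc ε r = Set.Icc ε r := Set.uIcc_of_le hεr
  have hderiv : ∀ t ∈ Set.uIcc ε r, HasDerivAt G (g t) t := by
    intro t ht
    rw [huIcc] at ht
    have ht0 : 0 < t := lt_of_lt_of_le hε ht.1
    have htne : t ≠ 0 := ne_of_gt ht0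
    have hdenpos : (0:ℝ) < 2 * b + 2 * t := by linarith
    have hde : (2 * b + 2 * t) ≠ 0 := ne_of_gt hdenpos
    have h1 : HasDerivAt (fun t : ℝ => t ^ 2) (2 * t) t := by
      simpa using hasDerivAt_pow 2 t
    have h2 : HasDerivAt (fun t : ℝ => 2 * b + 2 * t) 2 t := by
      simpa using ((hasDerivAt_id t).const_mul 2).const_add (2 * b)
    have hu : HasDerivAt (fun t : ℝ => t ^ 2 / (2 * b + 2 * t))
        ((2 * t * (2 * b + 2 * t) - t ^ 2 * 2) / (2 * b + 2 * t) ^ 2) t := h1.div h2 hde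
    have hq : HasDerivAt (fun t : ℝ => b / t) (-(b / t ^ 2)) t := by
      have := (hasDerivAt_inv htne).const_mul b
      simpa [div_eq_mul_inv, mul_neg] using this
    have hw : HasDerivAt (fun t : ℝ => -(b / t) - Real.exp (b / t))
        (b / t ^ 2 + Real.exp (b / t) * (b / t ^ 2)) t := by
      have := (hq.neg).sub hq.exp
      exact this.congr_deriv (by ring)
    have hv : HasDerivAt (fun t : ℝ => Real.exp (-(b / t) - Real.exp (b / t)))
        (Real.exp (-(b / t) - Real.exp (b / t)) * (b / t ^ 2 + Real.exp (b / t) * (b / t ^ 2)))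
        t := hw.exp
    have hGt := hu.mul hv
    exact hGt.congr_deriv (by rw [hgdef]; field_simp; ring)
  have hcontg : ContinuousOn g (Set.uIcc ε r) := by
    rw [huIcc]
    have hne : ∀ x ∈ Set.Icc ε r, x ≠ 0 := fun x hx => ne_of_gt (lt_of_lt_of_le hε hx.1)
    have hdne : ∀ x ∈ Set.Icc ε r, (2 * b + 2 * x) ≠ 0 := fun x hx => by
      have := lt_of_lt_of_le hε hx.1; positivity
    have hdne2 : ∀ x ∈ Set.Icc ε r, ((2 * b + 2 * x) : ℝ) ^ 2 ≠ 0 := fun x hx =>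
      pow_ne_zero _ (hdne x hx)
    have hne2 : ∀ x ∈ Set.Icc ε r, (x : ℝ) ^ 2 ≠ 0 := fun x hx => pow_ne_zero _ (hne x hx)
    have hcbt : ContinuousOn (fun t : ℝ => b / t) (Set.Icc ε r) :=
      ContinuousOn.div continuousOn_const continuousOn_id hne
    have hcexp : ContinuousOn (fun t : ℝ => Real.exp (b / t)) (Set.Icc ε r) :=
      Real.continuous_exp.comp_continuousOn hcbt
    apply ContinuousOn.mul
    · apply ContinuousOn.add
      · exact ContinuousOn.div (by fun_prop) (by fun_prop) hdne2
      · apply ContinuousOn.mul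
        · apply ContinuousOn.mul
          · exact ContinuousOn.div (by fun_prop) (by fun_prop) hdne
          · exact ContinuousOn.div continuousOn_const (by fun_prop) hne2
        · exact continuousOn_const.add hcexp
    · exact Real.continuous_exp.comp_continuousOn (hcbt.neg.sub hcexp)
  have hint_g : IntervalIntegrable g volume ε r := hcontg.intervalIntegrable
  have hcontφ : ContinuousOn (fun t : ℝ => Real.exp (-Real.exp (b / t))) (Set.uIcc ε r) := by
    rw [huIcc]
    exact contOn_phi b (fun x hx => ne_of_gt (lt_of_lt_of_le hε hx.1))
  have hint_φ : IntervalIntegrable (fun t : ℝ => Real.exp (-Real.exp (b / t))) volume ε r :=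
    hcontφ.intervalIntegrable
  have hftc : ∫ t in ε..r, g t = G r - G ε :=
    intervalIntegral.integral_eq_sub_of_hasDerivAt hderiv hint_g
  have hmono : ∫ t in ε..r, g t ≤ ∫ t in ε..r, Real.exp (-Real.exp (b / t)) := by
    apply intervalIntegral.integral_mono_on hεr hint_g hint_φ
    intro t ht
    have ht0 : 0 < t := lt_of_lt_of_le hε ht.1
    have htne : t ≠ 0 := ne_of_gt ht0
    have hdenpos : (0:ℝ) < 2 * b + 2 * t := by linarith
    have hEP : Real.exp (-(b / t) - Real.exp (b / t))
        = Real.exp (-(b / t)) * Real.exp (-Real.exp (b / t)) := by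
      rw [← Real.exp_add]; ring_nf
    have hPE : Real.exp (-(b / t)) * Real.exp (b / t) = 1 := by
      rw [← Real.exp_add]; simp
    have hP1 : Real.exp (-(b / t)) ≤ 1 := by
      rw [Real.exp_le_one_iff]
      have : 0 < b / t := div_pos hb ht0
      linarith
    have hB : t ^ 2 / (2 * b + 2 * t) * (b / t ^ 2) = b / (2 * b + 2 * t) := by
      field_simp
    have hA0 : 0 ≤ (4 * b * t + 2 * t ^ 2) / (2 * b + 2 * t) ^ 2 := by positivity
    have hB0 : 0 ≤ b / (2 * b + 2 * t) := by positivity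
    have key : ((4 * b * t + 2 * t ^ 2) / (2 * b + 2 * t) ^ 2
        + t ^ 2 / (2 * b + 2 * t) * (b / t ^ 2) * (1 + Real.exp (b / t)))
        * Real.exp (-(b / t)) ≤ 1 := by
      rw [hB]
      have expand : (( (4 * b * t + 2 * t ^ 2) / (2 * b + 2 * t) ^ 2
            + b / (2 * b + 2 * t) * (1 + Real.exp (b / t))) * Real.exp (-(b / t)))
          = ((4 * b * t + 2 * t ^ 2) / (2 * b + 2 * t) ^ 2 + b / (2 * b + 2 * t))
              * Real.exp (-(b / t))
            + b / (2 * b + 2 * t) * (Real.exp (-(b / t)) * Real.exp (b / t)) := by ring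
      rw [expand, hPE, mul_one]
      have hsum : (4 * b * t + 2 * t ^ 2) / (2 * b + 2 * t) ^ 2 + 2 * (b / (2 * b + 2 * t))
          ≤ 1 := by
        have hcomb : (4 * b * t + 2 * t ^ 2) / (2 * b + 2 * t) ^ 2 + 2 * (b / (2 * b + 2 * t))
            = (4 * b * t + 2 * t ^ 2 + 2 * b * (2 * b + 2 * t)) / (2 * b + 2 * t) ^ 2 := by
          field_simp
        rw [hcomb, div_le_one (by positivity)]
        nlinarith [sq_nonneg t]
      have hstep : ((4 * b * t + 2 * t ^ 2) / (2 * b + 2 * t) ^ 2 + b / (2 * b + 2 * t))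
          * Real.exp (-(b / t))
          ≤ (4 * b * t + 2 * t ^ 2) / (2 * b + 2 * t) ^ 2 + b / (2 * b + 2 * t) := by
        have h0 : 0 ≤ (4 * b * t + 2 * t ^ 2) / (2 * b + 2 * t) ^ 2 + b / (2 * b + 2 * t) := by
          linarith
        nlinarith [Real.exp_pos (-(b / t))]
      linarith
    calc g t = ((4 * b * t + 2 * t ^ 2) / (2 * b + 2 * t) ^ 2
          + t ^ 2 / (2 * b + 2 * t) * (b / t ^ 2) * (1 + Real.exp (b / t)))
          * Real.exp (-(b / t)) * Real.exp (-Real.exp (b / t)) := by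
          rw [hgdef]; simp only [hEP]; ring
      _ ≤ 1 * Real.exp (-Real.exp (b / t)) :=
          mul_le_mul_of_nonneg_right key (Real.exp_pos _).le
      _ = Real.exp (-Real.exp (b / t)) := one_mul _
  rw [hftc] at hmono
  simpa [hGdef] using hmono

/-- Lower bound for the primitive of a doubly exponentially degenerate absorption potential:
if `ω` is positive, continuous and nondecreasing on `(0,∞)`, then
`∫₀ʳ e^{−e^{ω(t)/t}} dt ≥ (r²/(2ω(r)+2r)) e^{−ω(r)/r} e^{−e^{ω(r)/r}}` for all `r > 0`. -/
theorem primitive_lower_bound_doubly_exp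
    (ω : ℝ → ℝ) (hcont : ContinuousOn ω (Set.Ioi 0))
    (hpos : ∀ t : ℝ, 0 < t → 0 < ω t)
    (hmono : ∀ s t : ℝ, 0 < s → s ≤ t → ω s ≤ ω t) :
    ∀ r : ℝ, 0 < r →
      (r ^ 2 / (2 * ω r + 2 * r)) * Real.exp (-(ω r / r)) *
          Real.exp (-Real.exp (ω r / r)) ≤
        ∫ t in (0:ℝ)..r, Real.exp (-Real.exp (ω t / t)) := by
  intro r hr
  set b := ω r with hbdef
  have hbpos : 0 < b := hpos r hr
  set φ : ℝ → ℝ := fun t => Real.exp (-Real.exp (b / t)) with hφdef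
  set ψ : ℝ → ℝ := fun t => Real.exp (-Real.exp (ω t / t)) with hψdef
  -- integrability of ψ on Ioc 0 r
  have hψmeas : AEStronglyMeasurable ψ (volume.restrict (Set.Ioc 0 r)) := by
    apply ContinuousOn.aestronglyMeasurable _ measurableSet_Ioc
    apply Real.continuous_exp.comp_continuousOn
    apply ContinuousOn.neg
    apply Real.continuous_exp.comp_continuousOn
    apply ContinuousOn.div (hcont.mono (fun x hx => hx.1)) continuousOn_id
      (fun x hx => ne_of_gt hx.1)
  have hbound : ∀ f : ℝ → ℝ, (∀ t, ∃ x, f t = Real.exp (-Real.exp x)) →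
      ∀ᵐ t ∂(volume.restrict (Set.Ioc 0 r)), ‖f t‖ ≤ 1 := by
    intro f hf
    filter_upwards with t
    obtain ⟨x, hx⟩ := hf t
    rw [hx, Real.norm_eq_abs, abs_of_pos (Real.exp_pos _), Real.exp_le_one_iff]
    simp [(Real.exp_pos x).le]
  have hconst : Integrable (fun _ : ℝ => (1:ℝ)) (volume.restrict (Set.Ioc 0 r)) := by
    rw [← IntegrableOn]
    exact integrableOn_const measure_Ioc_lt_top.ne
  have hψint : IntegrableOn ψ (Set.Ioc 0 r) volume := by
    apply Integrable.mono' hconst hψmeas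
    exact hbound ψ (fun t => ⟨ω t / t, rfl⟩)
  have hφmeas : AEStronglyMeasurable φ (volume.restrict (Set.Ioc 0 r)) := by
    apply ContinuousOn.aestronglyMeasurable _ measurableSet_Ioc
    exact contOn_phi b (fun x hx => ne_of_gt hx.1)
  have hφint : IntegrableOn φ (Set.Ioc 0 r) volume := by
    apply Integrable.mono' hconst hφmeas
    exact hbound φ (fun t => ⟨b / t, rfl⟩)
  -- Step A : ∫ φ ≤ ∫ ψ on Ioc 0 r
  have stepA : ∫ t in Set.Ioc 0 r, φ t ≤ ∫ t in Set.Ioc 0 r, ψ t := by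
    apply setIntegral_mono_on hφint hψint measurableSet_Ioc
    intro t ht
    apply exp_neg_exp_anti
    exact div_le_div_of_nonneg_right (hmono t r ht.1 ht.2) ht.1.le
  -- Step B : for all ε ∈ (0, r], a lower bound
  have stepB : ∀ ε : ℝ, 0 < ε → ε ≤ r →
      r ^ 2 / (2 * b + 2 * r) * Real.exp (-(b / r) - Real.exp (b / r))
        ≤ (∫ t in Set.Ioc 0 r, φ t) + ε ^ 2 / (2 * b) := by
    intro ε hε hεr
    have h1 := aux_fto b hbpos hε hεr
    have h2 : ∫ t in ε..r, Real.exp (-Real.exp (b / t)) = ∫ t in Set.Ioc ε r, φ t :=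
      intervalIntegral.integral_of_le hεr
    have h3 : ∫ t in Set.Ioc ε r, φ t ≤ ∫ t in Set.Ioc 0 r, φ t := by
      apply setIntegral_mono_set hφint
      · filter_upwards with t
        exact (Real.exp_pos _).le
      · exact HasSubset.Subset.eventuallyLE (Set.Ioc_subset_Ioc_left hε.le)
    have h4 : ε ^ 2 / (2 * b + 2 * ε) * Real.exp (-(b / ε) - Real.exp (b / ε))
        ≤ ε ^ 2 / (2 * b) := by
      have hle1 : Real.exp (-(b / ε) - Real.exp (b / ε)) ≤ 1 := by
        rw [Real.exp_le_one_iff]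
        have h5 : 0 < b / ε := div_pos hbpos hε
        have h6 := Real.exp_pos (b / ε)
        linarith
      calc ε ^ 2 / (2 * b + 2 * ε) * Real.exp (-(b / ε) - Real.exp (b / ε))
          ≤ ε ^ 2 / (2 * b + 2 * ε) * 1 := by
            apply mul_le_mul_of_nonneg_left hle1 (by positivity)
        _ = ε ^ 2 / (2 * b + 2 * ε) := mul_one _
        _ ≤ ε ^ 2 / (2 * b) := by
            apply div_le_div_of_nonneg_left (by positivity) (by positivity) (by linarith)
    rw [h2] at h1
    linarith
  -- Step C : take ε → 0
  have stepC : r ^ 2 / (2 * b + 2 * r) * Real.exp (-(b / r) - Real.exp (b / r))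
      ≤ ∫ t in Set.Ioc 0 r, φ t := by
    apply le_of_forall_pos_le_add
    intro δ hδ
    set ε : ℝ := min r (Real.sqrt (2 * b * δ)) with hεdef
    have hsq : 0 < Real.sqrt (2 * b * δ) := Real.sqrt_pos.2 (by positivity)
    have hε : 0 < ε := lt_min hr hsq
    have hεr : ε ≤ r := min_le_left _ _
    have hεsq : ε ^ 2 ≤ 2 * b * δ := by
      have h1 : ε ≤ Real.sqrt (2 * b * δ) := min_le_right _ _
      have h2 : ε ^ 2 ≤ Real.sqrt (2 * b * δ) ^ 2 := by
        apply pow_le_pow_left₀ hε.le h1 2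
      rwa [Real.sq_sqrt (by positivity)] at h2
    have hεδ : ε ^ 2 / (2 * b) ≤ δ := by
      rw [div_le_iff₀ (by positivity)]
      linarith
    have := stepB ε hε hεr
    linarith
  -- conclude
  have hfinal : r ^ 2 / (2 * b + 2 * r) * Real.exp (-(b / r) - Real.exp (b / r))
      ≤ ∫ t in Set.Ioc 0 r, ψ t := le_trans stepC stepA
  rw [intervalIntegral.integral_of_le hr.le]
  have hexp : Real.exp (-(b / r) - Real.exp (b / r))
      = Real.exp (-(b / r)) * Real.exp (-Real.exp (b / r)) := by
    rw [← Real.exp_add]; ring_nf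
  rw [hexp] at hfinal
  calc r ^ 2 / (2 * ω r + 2 * r) * Real.exp (-(ω r / r)) * Real.exp (-Real.exp (ω r / r))
      = r ^ 2 / (2 * b + 2 * r) * (Real.exp (-(b / r)) * Real.exp (-Real.exp (b / r))) := by
        rw [← hbdef]; ring
    _ ≤ ∫ t in Set.Ioc 0 r, ψ t := by rw [← mul_assoc] at hfinal ⊢; exact hfinal
end

section
/- (Finite extinction for an ordinary differential inequality.) Let τ₀ ∈ ℝ, C > 0, b > 1, and let E : [τ₀,∞) → [0,∞) be continuously differentiable and nonincreasing, satisfying E(τ) ≤ C·(−E′(τ))^{b} for every τ ≥ τ₀ with E(τ) > 0. Then E(τ) = 0 for every τ ≥ τ₀ + (b/(b−1))·C^{1/b}·E(τ₀)^{(b−1)/b}. -/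
open MeasureTheory Filter

/-- Finite extinction for an ordinary differential inequality: if `E ≥ 0` is `C¹`,
nonincreasing on `[τ₀,∞)` and satisfies `E(τ) ≤ C (−E'(τ))^b` with `b > 1` wherever
`E(τ) > 0`, then `E` vanishes identically for
`τ ≥ τ₀ + (b/(b−1)) C^{1/b} E(τ₀)^{(b−1)/b}`. -/
theorem finite_extinction
    (τ₀ C b : ℝ) (hC : 0 < C) (hb : 1 < b)
    (E E' : ℝ → ℝ)
    (hEderiv : ∀ τ : ℝ, τ₀ ≤ τ → HasDerivAt E (E' τ) τ)
    (hE'cont : ContinuousOn E' (Set.Ici τ₀))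
    (hEnn : ∀ τ : ℝ, τ₀ ≤ τ → 0 ≤ E τ)
    (hEmono : ∀ a b' : ℝ, τ₀ ≤ a → a ≤ b' → E b' ≤ E a)
    (hineq : ∀ τ : ℝ, τ₀ ≤ τ → 0 < E τ → E τ ≤ C * (-E' τ) ^ b) :
    ∀ τ : ℝ, τ₀ + (b/(b - 1)) * C ^ (1/b) * E τ₀ ^ ((b - 1)/b) ≤ τ → E τ = 0 := by
  intro τ₁ hτ₁
  have hb0 : (0:ℝ) < b := lt_trans one_pos hb
  set θ : ℝ := (b - 1)/b with hθdef
  have hθpos : 0 < θ := div_pos (by linarith) hb0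
  have hθ1 : θ = 1 - 1/b := by rw [hθdef]; field_simp
  have hCb : (0:ℝ) < C ^ (1/b) := Real.rpow_pos_of_pos hC _
  set K : ℝ := θ / C ^ (1/b) with hKdef
  have hKpos : 0 < K := div_pos hθpos hCb
  have hτ₀τ₁ : τ₀ ≤ τ₁ := by
    have h1 : 0 ≤ (b/(b - 1)) * C ^ (1/b) * E τ₀ ^ θ := by
      have h2 : (0:ℝ) ≤ b/(b - 1) := le_of_lt (div_pos hb0 (by linarith))
      exact mul_nonneg (mul_nonneg h2 hCb.le) (Real.rpow_nonneg (hEnn τ₀ le_rfl) _)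
    linarith
  by_contra hne
  have hpos : 0 < E τ₁ := lt_of_le_of_ne (hEnn τ₁ hτ₀τ₁) (Ne.symm hne)
  have hEpos : ∀ s ∈ Set.Icc τ₀ τ₁, 0 < E s := fun s hs =>
    lt_of_lt_of_le hpos (hEmono s τ₁ hs.1 hs.2)
  -- nonincreasing implies nonpositive derivative
  have hE'le : ∀ s, τ₀ ≤ s → E' s ≤ 0 := by
    intro s hs
    have hd := (hEderiv s hs).hasDerivWithinAt (s := Set.Ioi s)
    rw [hasDerivWithinAt_iff_tendsto_slope' ((by simp : s ∉ Set.Ioi s))] at hd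
    refine le_of_tendsto hd ?_
    filter_upwards [self_mem_nhdsWithin] with t ht
    have hst : s < t := ht
    rw [slope_def_field]
    have hEt : E t ≤ E s := hEmono s t hs hst.le
    exact div_nonpos_of_nonpos_of_nonneg (by linarith) (by linarith)
  -- G has derivative E' s * θ * E s ^ (θ - 1) + K at each point of the interval
  have hG : ∀ s ∈ Set.Icc τ₀ τ₁, HasDerivAt (fun t => E t ^ θ + K * (t - τ₀))
      (E' s * θ * E s ^ (θ - 1) + K) s := by
    intro s hs
    have h1 : HasDerivAt (fun t => E t ^ θ) (E' s * θ * E s ^ (θ - 1)) s :=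
      (hEderiv s hs.1).rpow_const (Or.inl (hEpos s hs).ne')
    have h2 : HasDerivAt (fun t : ℝ => K * (t - τ₀)) K s := by
      simpa using ((hasDerivAt_id s).sub_const τ₀).const_mul K
    exact h1.add h2
  -- derivative bound
  have hderiv_nonpos : ∀ s ∈ Set.Icc τ₀ τ₁, E' s * θ * E s ^ (θ - 1) + K ≤ 0 := by
    intro s hs
    have hEs := hEpos s hs
    have hE' := hE'le s hs.1
    have hineq' := hineq s hs.1 hEs
    have h1 : (E s / C) ^ (1/b) ≤ -E' s := by
      have hle : E s / C ≤ (-E' s) ^ b := (div_le_iff₀ hC).2 (by linarith)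
      calc (E s / C) ^ (1/b) ≤ ((-E' s) ^ b) ^ (1/b) :=
            Real.rpow_le_rpow (by positivity) hle (by positivity)
        _ = -E' s := by
            rw [← Real.rpow_mul (by linarith : (0:ℝ) ≤ -E' s), mul_one_div,
              div_self hb0.ne', Real.rpow_one]
    have h2 : E s ^ (θ - 1) * (E s / C) ^ (1/b) = 1 / C ^ (1/b) := by
      rw [Real.div_rpow (hEnn s hs.1) hC.le, mul_div_assoc', ← Real.rpow_add hEs]
      have h3 : θ - 1 + 1/b = 0 := by rw [hθ1]; ring
      rw [h3, Real.rpow_zero]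
    have hpow : 0 < E s ^ (θ - 1) := Real.rpow_pos_of_pos hEs _
    have h4 := mul_le_mul_of_nonneg_left h1 (mul_nonneg hθpos.le hpow.le)
    -- h4 : θ * E^(θ-1) * (E/C)^(1/b) ≤ θ * E^(θ-1) * (-E' s)
    have h5 : θ * E s ^ (θ - 1) * (E s / C) ^ (1/b) = K := by
      rw [hKdef, mul_assoc, h2]; ring
    nlinarith [h4, h5]
  have hanti : AntitoneOn (fun t => E t ^ θ + K * (t - τ₀)) (Set.Icc τ₀ τ₁) := by
    apply antitoneOn_of_deriv_nonpos (convex_Icc _ _)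
    · exact fun s hs => (hG s hs).differentiableAt.continuousAt.continuousWithinAt
    · exact fun s hs => ((hG s (interior_subset hs)).differentiableAt).differentiableWithinAt
    · intro s hs
      rw [(hG s (interior_subset hs)).deriv]
      exact hderiv_nonpos s (interior_subset hs)
  have hmono := hanti (Set.left_mem_Icc.2 hτ₀τ₁) (Set.right_mem_Icc.2 hτ₀τ₁) hτ₀τ₁
  simp only [sub_self, mul_zero, add_zero] at hmono
  -- hmono : E τ₁ ^ θ + K * (τ₁ - τ₀) ≤ E τ₀ ^ θ
  have hFpos : 0 < E τ₁ ^ θ := Real.rpow_pos_of_pos hpos _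
  have hKid : K * ((b/(b - 1)) * C ^ (1/b) * E τ₀ ^ θ) = E τ₀ ^ θ := by
    have h6 : K * ((b/(b - 1)) * C ^ (1/b) * E τ₀ ^ θ) =
        (θ * (b/(b - 1))) * (C ^ (1/b) / C ^ (1/b)) * E τ₀ ^ θ := by
      rw [hKdef]; ring
    have hθb : θ * (b/(b - 1)) = 1 := by
      have hb1 : b - 1 ≠ 0 := by linarith
      rw [hθdef]; field_simp
    rw [h6, div_self hCb.ne', hθb, one_mul, one_mul]
  have hstep : E τ₀ ^ θ ≤ K * (τ₁ - τ₀) := by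
    rw [← hKid]
    exact mul_le_mul_of_nonneg_left (by linarith) hKpos.le
  linarith
end

section
/- Let N ≥ 1 and q > m > 1. Let ψ : [0,∞) → ℝ be twice continuously differentiable with 0 < ψ(r) ≤ 1 for all r ≥ 0, ψ′(0) = 0, and ψ″(r) + ((N−1)/r)·ψ′(r) = ψ(r)^{q/m} − ψ(r)^{1/m} for every r > 0. Then ψ(r) = 1 for every r ≥ 0. -/
open MeasureTheory Filter

private lemma deriv_rate (f f' : ℝ → ℝ) (a C : ℝ)
    (hf : ∀ x, a ≤ x → HasDerivAt f (f' x) x)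
    (hC : ∀ x, a < x → C ≤ f' x) :
    ∀ r, a ≤ r → f a + C * (r - a) ≤ f r := by
  intro r hr
  have hd : ∀ x, a ≤ x → HasDerivAt (fun y => f y - C * y) (f' x - C * 1) x := by
    intro x hx
    exact (hf x hx).sub ((hasDerivAt_id x).const_mul C)
  have hmono : MonotoneOn (fun x => f x - C * x) (Set.Ici a) := by
    apply monotoneOn_of_deriv_nonneg (convex_Ici a)
    · intro x hx
      exact (hd x hx).continuousAt.continuousWithinAt
    · intro x hx
      rw [interior_Ici] at hx
      exact (hd x (le_of_lt hx)).differentiableAt.differentiableWithinAt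
    · intro x hx
      rw [interior_Ici] at hx
      rw [(hd x (le_of_lt hx)).deriv]
      have := hC x hx
      linarith
  have h := hmono Set.self_mem_Ici (Set.mem_Ici.2 hr) hr
  have h' : f a - C * a ≤ f r - C * r := h
  linarith

set_option maxHeartbeats 1600000 in
/-- The radial elliptic equation `ψ'' + ((N−1)/r) ψ' = ψ^{q/m} − ψ^{1/m}` on `(0,∞)`, with
`ψ'(0) = 0` and `0 < ψ ≤ 1`, admits only the constant solution `ψ ≡ 1` (for `q > m > 1`). -/
theorem radial_elliptic_uniqueness
    (N : ℕ) (hN : 1 ≤ N) (m q : ℝ) (hm : 1 < m) (hq : m < q)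
    (ψ ψ' ψ'' : ℝ → ℝ)
    (hd1 : ∀ r : ℝ, 0 ≤ r → HasDerivAt ψ (ψ' r) r)
    (hd2 : ∀ r : ℝ, 0 ≤ r → HasDerivAt ψ' (ψ'' r) r)
    (hd2cont : ContinuousOn ψ'' (Set.Ici 0))
    (hpos : ∀ r : ℝ, 0 ≤ r → 0 < ψ r)
    (hle : ∀ r : ℝ, 0 ≤ r → ψ r ≤ 1)
    (hzero : ψ' 0 = 0)
    (hode : ∀ r : ℝ, 0 < r →
      ψ'' r + (((N : ℝ) - 1)/r) * ψ' r = ψ r ^ (q/m) - ψ r ^ (1/m)) :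
    ∀ r : ℝ, 0 ≤ r → ψ r = 1 := by
  obtain ⟨k, rfl⟩ : ∃ k, N = k + 1 := ⟨N - 1, (Nat.succ_pred_eq_of_pos hN).symm⟩
  have hm0 : (0 : ℝ) < m := by linarith
  -- rewrite the ODE with coefficient `k/r`
  have hodek : ∀ r : ℝ, 0 < r →
      ψ'' r + ((k : ℝ)/r) * ψ' r = ψ r ^ (q/m) - ψ r ^ (1/m) := by
    intro r hr
    have h := hode r hr
    have hc : ((k + 1 : ℕ) : ℝ) - 1 = (k : ℝ) := by push_cast; ring
    rw [hc] at h
    exact h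
  -- the nonlinearity is nonpositive
  have hfle : ∀ r : ℝ, 0 ≤ r → ψ r ^ (q/m) - ψ r ^ (1/m) ≤ 0 := by
    intro r hr
    have h1 : ψ r ^ (q/m) ≤ ψ r ^ (1/m) := by
      apply Real.rpow_le_rpow_of_exponent_ge (hpos r hr) (hle r hr)
      rw [div_le_div_iff₀ hm0 hm0]
      nlinarith
    linarith
  -- the function r^k ψ' is nonincreasing, starting at 0; hence ψ' ≤ 0
  have hrate_v := deriv_rate (fun x => -(x ^ k * ψ' x))
      (fun x => -((k : ℝ) * x ^ (k - 1) * ψ' x + x ^ k * ψ'' x)) 0 0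
      (fun x hx => ((hasDerivAt_pow k x).mul (hd2 x hx)).neg)
      (by
        intro x hx
        have hx' : x ≠ 0 := ne_of_gt hx
        have hiden : (k : ℝ) * x ^ (k - 1) * ψ' x + x ^ k * ψ'' x
            = x ^ k * (ψ'' x + ((k : ℝ)/x) * ψ' x) := by
          cases k with
          | zero => simp
          | succ j =>
            simp only [Nat.add_sub_cancel]
            push_cast
            field_simp
            ring
        show 0 ≤ -((k : ℝ) * x ^ (k - 1) * ψ' x + x ^ k * ψ'' x)
        rw [hiden, hodek x hx]
        have h := hfle x hx.le
        nlinarith [mul_nonneg (pow_nonneg hx.le k) (neg_nonneg.2 h)])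
  have hp0 : ∀ r : ℝ, 0 ≤ r → ψ' r ≤ 0 := by
    intro r hr
    rcases eq_or_lt_of_le hr with h | h
    · rw [← h, hzero]
    · have hv : -((0 : ℝ) ^ k * ψ' 0) + 0 * (r - 0) ≤ -(r ^ k * ψ' r) := hrate_v r hr
      rw [hzero] at hv
      have hv' : r ^ k * ψ' r ≤ 0 := by
        have : -((0 : ℝ) ^ k * 0) + 0 * (r - 0) = 0 := by ring
        linarith [hv, this.symm.le.trans hv]
      nlinarith [pow_pos h k]
  -- ψ is nonincreasing
  have hmono : ∀ a : ℝ, 0 ≤ a → ∀ r : ℝ, a ≤ r → ψ r ≤ ψ a := by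
    intro a ha r hr
    have h := deriv_rate (fun x => -ψ x) (fun x => -ψ' x) a 0
      (fun x hx => (hd1 x (ha.trans hx)).neg)
      (fun x hx => neg_nonneg.2 (hp0 x (ha.trans hx.le)))
      r hr
    have h' : -ψ a + 0 * (r - a) ≤ -ψ r := h
    linarith
  -- main argument: suppose ψ r₀ < 1 for some r₀ ≥ 0
  intro r₀ hr₀
  by_contra hne
  have hψr₀ : ψ r₀ < 1 := lt_of_le_of_ne (hle r₀ hr₀) hne
  set r₁ : ℝ := max r₀ 1 with hr₁def
  have hr₁1 : (1 : ℝ) ≤ r₁ := le_max_right _ _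
  have hr₁0 : (0 : ℝ) ≤ r₁ := by linarith
  have hc1 : ψ r₁ < 1 := lt_of_le_of_lt (hmono r₀ hr₀ r₁ (le_max_left _ _)) hψr₀
  have hc0 : 0 < ψ r₁ := hpos r₁ hr₁0
  have hQlt : ψ r₁ ^ ((q - 1)/m) < 1 :=
    Real.rpow_lt_one hc0.le hc1 (div_pos (by linarith) hm0)
  have hQ0 : 0 ≤ ψ r₁ ^ ((q - 1)/m) := (Real.rpow_pos_of_pos hc0 _).le
  set ε : ℝ := (1 - ψ r₁ ^ ((q - 1)/m)) / 2 with hεdef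
  have hεpos : 0 < ε := by rw [hεdef]; linarith
  have h2ε : 2 * ε = 1 - ψ r₁ ^ ((q - 1)/m) := by rw [hεdef]; ring
  -- key uniform bound: −f(ψ)/ψ ≥ 2ε on [r₁, ∞)
  have hkey : ∀ x : ℝ, r₁ ≤ x → 2 * ε * ψ x ≤ ψ x ^ (1/m) - ψ x ^ (q/m) := by
    intro x hx
    have hx0 : (0 : ℝ) ≤ x := le_trans hr₁0 hx
    have hs0 : 0 < ψ x := hpos x hx0
    have hsc : ψ x ≤ ψ r₁ := hmono r₁ hr₁0 x hx
    have hs1 : ψ x ≤ 1 := hle x hx0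
    have hexp : q/m = 1/m + (q - 1)/m := by field_simp; ring
    have hsplit : ψ x ^ (q/m) = ψ x ^ (1/m) * ψ x ^ ((q - 1)/m) := by
      rw [hexp, Real.rpow_add hs0]
    have h2 : ψ x ^ ((q - 1)/m) ≤ ψ r₁ ^ ((q - 1)/m) :=
      Real.rpow_le_rpow hs0.le hsc (le_of_lt (div_pos (by linarith) hm0))
    have h3 : ψ x ≤ ψ x ^ (1/m) := by
      nth_rewrite 1 [← Real.rpow_one (ψ x)]
      exact Real.rpow_le_rpow_of_exponent_ge hs0 hs1 (by rw [div_le_one hm0]; linarith)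
    have h4 : 0 < ψ x ^ (1/m) := Real.rpow_pos_of_pos hs0 _
    rw [hsplit, h2ε]
    nlinarith [mul_nonneg h4.le (sub_nonneg.2 h2),
      mul_nonneg (by linarith : (0 : ℝ) ≤ 1 - ψ r₁ ^ ((q - 1)/m)) (sub_nonneg.2 h3)]
  -- Riccati variable w = -ψ'/ψ
  set w : ℝ → ℝ := fun x => -ψ' x / ψ x with hwdef
  set wd : ℝ → ℝ := fun x => (-ψ'' x * ψ x - -ψ' x * ψ' x) / ψ x ^ 2 with hwddef
  have hw : ∀ x : ℝ, 0 ≤ x → HasDerivAt w (wd x) x := fun x hx =>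
    ((hd2 x hx).neg).div (hd1 x hx) (ne_of_gt (hpos x hx))
  have hwnn : ∀ x : ℝ, 0 ≤ x → 0 ≤ w x := fun x hx =>
    div_nonneg (by linarith [hp0 x hx]) (hpos x hx).le
  -- differential inequality
  have hdi : ∀ x : ℝ, r₁ ≤ x → ((k : ℝ)/x) ^ 2 ≤ 2 * ε → ε + w x ^ 2 / 2 ≤ wd x := by
    intro x hx hA
    have hxpos : (0 : ℝ) < x := lt_of_lt_of_le one_pos (hr₁1.trans hx)
    have hs : 0 < ψ x := hpos x hxpos.le
    have hode' := hodek x hxpos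
    have hk := hkey x hx
    have hwx : w x = -ψ' x / ψ x := rfl
    have hwdx : wd x = (-ψ'' x * ψ x - -ψ' x * ψ' x) / ψ x ^ 2 := rfl
    rw [hwx, hwdx, div_pow, neg_sq]
    rw [le_div_iff₀ (by positivity : (0 : ℝ) < ψ x ^ 2)]
    have hexpand : (ε + ψ' x ^ 2 / ψ x ^ 2 / 2) * ψ x ^ 2 = ε * ψ x ^ 2 + ψ' x ^ 2 / 2 := by
      field_simp
    rw [hexpand]
    have hpp : ψ'' x = (ψ x ^ (q/m) - ψ x ^ (1/m)) - ((k : ℝ)/x) * ψ' x := by linarith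
    rw [hpp]
    nlinarith [mul_le_mul_of_nonneg_right hk hs.le,
      sq_nonneg (((k : ℝ)/x) * ψ x + ψ' x),
      mul_nonneg (sub_nonneg.2 hA) (sq_nonneg (ψ x))]
  -- for x large the coefficient term is small
  set R₀ : ℝ := max r₁ ((k : ℝ) / Real.sqrt (2 * ε)) with hR₀def
  have hR₀r₁ : r₁ ≤ R₀ := le_max_left _ _
  have hR₀0 : (0 : ℝ) ≤ R₀ := hr₁0.trans hR₀r₁
  have hAbound : ∀ x : ℝ, R₀ ≤ x → ((k : ℝ)/x) ^ 2 ≤ 2 * ε := by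
    intro x hx
    have hxpos : (0 : ℝ) < x := lt_of_lt_of_le one_pos (hr₁1.trans (hR₀r₁.trans hx))
    have hsq : 0 < Real.sqrt (2 * ε) := Real.sqrt_pos.2 (by linarith)
    have h1 : (k : ℝ) / Real.sqrt (2 * ε) ≤ x := (le_max_right _ _).trans hx
    have h2 : (k : ℝ) ≤ x * Real.sqrt (2 * ε) := by
      rw [div_le_iff₀ hsq] at h1; linarith
    have h3 : (k : ℝ)/x ≤ Real.sqrt (2 * ε) := by
      rw [div_le_iff₀ hxpos, mul_comm]; exact h2
    have h4 : 0 ≤ (k : ℝ)/x := div_nonneg (Nat.cast_nonneg k) hxpos.le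
    calc ((k : ℝ)/x) ^ 2 ≤ Real.sqrt (2 * ε) ^ 2 := pow_le_pow_left₀ h4 h3 2
    _ = 2 * ε := Real.sq_sqrt (by linarith)
  -- w grows at least linearly after R₀
  have hrate1 := deriv_rate w wd R₀ ε (fun x hx => hw x (hR₀0.trans hx))
    (fun x hx => by
      have h := hdi x (hR₀r₁.trans hx.le) (hAbound x hx.le)
      nlinarith [sq_nonneg (w x)])
  set R₁ : ℝ := R₀ + 1/ε with hR₁def
  have hR₁0 : R₀ ≤ R₁ := by
    rw [hR₁def]
    have : 0 < 1/ε := by positivity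
    linarith
  have hw1 : ∀ x : ℝ, R₁ ≤ x → 1 ≤ w x := by
    intro x hx
    have hx0 : R₀ ≤ x := hR₁0.trans hx
    have h := hrate1 x hx0
    have hw0' : 0 ≤ w R₀ := hwnn R₀ hR₀0
    have h1 : 1/ε ≤ x - R₀ := by rw [hR₁def] at hx; linarith
    have h2 : ε * (1/ε) ≤ ε * (x - R₀) := mul_le_mul_of_nonneg_left h1 hεpos.le
    have h3 : ε * (1/ε) = 1 := by field_simp
    linarith
  -- −1/w has derivative ≥ 1/2 after R₁, but stays negative: contradiction
  have hrate2 := deriv_rate (fun x => (-1) / w x) (fun x => wd x / w x ^ 2) R₁ (1/2)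
    (fun x hx => by
      have hwx1 : 1 ≤ w x := hw1 x hx
      have hne' : w x ≠ 0 := by linarith
      have h := (hasDerivAt_const x (-1 : ℝ)).div (hw x (hR₀0.trans (hR₁0.trans hx))) hne'
      have heq : (0 * w x - (-1) * wd x) / w x ^ 2 = wd x / w x ^ 2 := by ring
      rw [heq] at h
      exact h)
    (fun x hx => by
      have hwx1 : 1 ≤ w x := hw1 x hx.le
      have hxR₀ : R₀ ≤ x := hR₁0.trans hx.le
      have h := hdi x (hR₀r₁.trans hxR₀) (hAbound x hxR₀)
      have hwsq : (0 : ℝ) < w x ^ 2 := by nlinarith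
      rw [le_div_iff₀ hwsq]
      nlinarith)
  have h1 := hrate2 (R₁ + 4) (by linarith)
  have h1' : (-1) / w R₁ + 1/2 * ((R₁ + 4) - R₁) ≤ (-1) / w (R₁ + 4) := h1
  have hwR₁ : 1 ≤ w R₁ := hw1 R₁ le_rfl
  have hwR₄ : 1 ≤ w (R₁ + 4) := hw1 _ (by linarith)
  have hgR₁ : -1 ≤ (-1) / w R₁ := by
    rw [neg_div]
    have : 1 / w R₁ ≤ 1 := by
      rw [div_le_one (by linarith)]
      exact hwR₁
    linarith
  have hgR₄ : (-1) / w (R₁ + 4) < 0 :=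
    div_neg_of_neg_of_pos (by norm_num) (by linarith)
  linarith
end

section
/- (Concavity nonexistence lemma.) Let τ₀ ∈ ℝ, p > 0, and let g : [τ₀,∞) → [0,∞) be continuous with ∫_{τ₀}^{∞} g(τ)dτ = ∞. Then there is no twice continuously differentiable function Ψ : [τ₀,∞) → (0,∞) satisfying Ψ″(τ) ≤ −g(τ)·Ψ(τ)^{p} for every τ ≥ τ₀. -/
open MeasureTheory Filter

/-- Concavity nonexistence lemma: if `g ≥ 0` is continuous on `[τ₀,∞)` with
`∫_{τ₀}^∞ g = ∞`, then there is no positive `C²` function `Ψ` on `[τ₀,∞)` with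
`Ψ'' ≤ −g Ψ^p` (for any `p > 0`). -/
theorem concavity_nonexistence
    (τ₀ p : ℝ) (hp : 0 < p) (g : ℝ → ℝ)
    (hgcont : ContinuousOn g (Set.Ici τ₀))
    (hgnn : ∀ τ : ℝ, τ₀ ≤ τ → 0 ≤ g τ)
    (hgdiv : Tendsto (fun R : ℝ => ∫ τ in τ₀..R, g τ) atTop atTop) :
    ¬ ∃ Ψ Ψ' Ψ'' : ℝ → ℝ,
        (∀ τ : ℝ, τ₀ ≤ τ → HasDerivAt Ψ (Ψ' τ) τ) ∧
        (∀ τ : ℝ, τ₀ ≤ τ → HasDerivAt Ψ' (Ψ'' τ) τ) ∧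
        ContinuousOn Ψ'' (Set.Ici τ₀) ∧
        (∀ τ : ℝ, τ₀ ≤ τ → 0 < Ψ τ) ∧
        (∀ τ : ℝ, τ₀ ≤ τ → Ψ'' τ ≤ -g τ * Ψ τ ^ p) := by
  rintro ⟨Ψ, Ψ', Ψ'', hΨ, hΨ', hΨ''cont, hpos, hineq⟩
  have hΨ'cont : ContinuousOn Ψ' (Set.Ici τ₀) := fun x hx =>
    ((hΨ' x hx).continuousAt).continuousWithinAt
  -- FTC for Ψ' : ∫ Ψ'' = Ψ' b - Ψ' a
  have ftc' : ∀ a b : ℝ, τ₀ ≤ a → a ≤ b → (∫ t in a..b, Ψ'' t) = Ψ' b - Ψ' a := by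
    intro a b ha hab
    apply intervalIntegral.integral_eq_sub_of_hasDerivAt
    · intro x hx
      rw [Set.uIcc_of_le hab] at hx
      exact hΨ' x (ha.trans hx.1)
    · apply ContinuousOn.intervalIntegrable
      apply hΨ''cont.mono
      rw [Set.uIcc_of_le hab]
      exact fun x hx => ha.trans hx.1
  -- FTC for Ψ : ∫ Ψ' = Ψ b - Ψ a
  have ftc : ∀ a b : ℝ, τ₀ ≤ a → a ≤ b → (∫ t in a..b, Ψ' t) = Ψ b - Ψ a := by
    intro a b ha hab
    apply intervalIntegral.integral_eq_sub_of_hasDerivAt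
    · intro x hx
      rw [Set.uIcc_of_le hab] at hx
      exact hΨ x (ha.trans hx.1)
    · apply ContinuousOn.intervalIntegrable
      apply hΨ'cont.mono
      rw [Set.uIcc_of_le hab]
      exact fun x hx => ha.trans hx.1
  -- Ψ'' ≤ 0 on [τ₀,∞)
  have h2 : ∀ τ, τ₀ ≤ τ → Ψ'' τ ≤ 0 := by
    intro τ hτ
    have h3 : 0 ≤ Ψ τ ^ p := Real.rpow_nonneg (hpos τ hτ).le p
    nlinarith [hineq τ hτ, hgnn τ hτ]
  -- Ψ' is nonincreasing
  have hanti : ∀ a b : ℝ, τ₀ ≤ a → a ≤ b → Ψ' b ≤ Ψ' a := by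
    intro a b ha hab
    have hint : (∫ t in a..b, Ψ'' t) ≤ ∫ _t in a..b, (0:ℝ) := by
      apply intervalIntegral.integral_mono_on hab
      · apply ContinuousOn.intervalIntegrable
        apply hΨ''cont.mono
        rw [Set.uIcc_of_le hab]
        exact fun x hx => ha.trans hx.1
      · exact intervalIntegrable_const
      · intro u hu
        exact h2 u (ha.trans hu.1)
    rw [intervalIntegral.integral_const, smul_zero] at hint
    have := ftc' a b ha hab
    linarith
  -- Ψ' ≥ 0 on [τ₀,∞)
  have hΨ'nonneg : ∀ a : ℝ, τ₀ ≤ a → 0 ≤ Ψ' a := by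
    intro a ha
    by_contra h
    push_neg at h
    set b := a + Ψ a / (-Ψ' a) with hbdef
    have hΨa : 0 < Ψ a := hpos a ha
    have hfrac : 0 < Ψ a / (-Ψ' a) := div_pos hΨa (by linarith)
    have hab : a ≤ b := by simp only [hbdef]; linarith
    have hmono : (∫ t in a..b, Ψ' t) ≤ ∫ _t in a..b, Ψ' a := by
      apply intervalIntegral.integral_mono_on hab
      · apply ContinuousOn.intervalIntegrable
        apply hΨ'cont.mono
        rw [Set.uIcc_of_le hab]
        exact fun x hx => ha.trans hx.1
      · exact intervalIntegrable_const
      · intro x hx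
        exact hanti a x ha hx.1
    rw [intervalIntegral.integral_const, smul_eq_mul] at hmono
    rw [ftc a b ha hab] at hmono
    have hbma : (b - a) * Ψ' a = -Ψ a := by
      have hne : Ψ' a ≠ 0 := ne_of_lt h
      rw [hbdef]
      field_simp
      ring
    have hΨb : 0 < Ψ b := hpos b (ha.trans hab)
    nlinarith
  -- Ψ ≥ Ψ τ₀ on [τ₀,∞)
  have hlow : ∀ τ : ℝ, τ₀ ≤ τ → Ψ τ₀ ≤ Ψ τ := by
    intro τ hτ
    have hint : 0 ≤ ∫ t in τ₀..τ, Ψ' t := by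
      apply intervalIntegral.integral_nonneg hτ
      intro u hu
      exact hΨ'nonneg u hu.1
    have := ftc τ₀ τ le_rfl hτ
    linarith
  set c := Ψ τ₀ with hcdef
  have hc : 0 < c := hpos τ₀ le_rfl
  have hcp : 0 < c ^ p := Real.rpow_pos_of_pos hc p
  -- choose R with big integral
  have hev : ∀ᶠ R in atTop, (Ψ' τ₀ / c ^ p) < ∫ τ in τ₀..R, g τ :=
    hgdiv.eventually_gt_atTop _
  obtain ⟨R, hR1, hR2⟩ := ((eventually_ge_atTop τ₀).and hev).exists
  -- Ψ'' ≤ -c^p * g on [τ₀, R]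
  have hptwise : ∀ x ∈ Set.Icc τ₀ R, Ψ'' x ≤ (-(c ^ p)) * g x := by
    intro x hx
    have hgx := hgnn x hx.1
    have hrp : c ^ p ≤ Ψ x ^ p := Real.rpow_le_rpow hc.le (hlow x hx.1) hp.le
    have := hineq x hx.1
    nlinarith
  have hint : (∫ t in τ₀..R, Ψ'' t) ≤ ∫ t in τ₀..R, (-(c ^ p)) * g t := by
    apply intervalIntegral.integral_mono_on hR1
    · apply ContinuousOn.intervalIntegrable
      apply hΨ''cont.mono
      rw [Set.uIcc_of_le hR1]
      exact fun x hx => hx.1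
    · apply ContinuousOn.intervalIntegrable
      apply ContinuousOn.mul continuousOn_const
      apply hgcont.mono
      rw [Set.uIcc_of_le hR1]
      exact fun x hx => hx.1
    · exact hptwise
  rw [intervalIntegral.integral_const_mul, ftc' τ₀ R le_rfl hR1] at hint
  have hΨ'R := hΨ'nonneg R hR1
  have : Ψ' τ₀ / c ^ p * c ^ p = Ψ' τ₀ := div_mul_cancel₀ _ (ne_of_gt hcp)
  nlinarith [hR2, mul_lt_mul_of_pos_right hR2 hcp]
end

section
/- Let r₀ > 0 and p > 0. There is no twice continuously differentiable function ψ : [r₀,∞) → (0,∞) satisfying ψ″(r) + (1/r)·ψ′(r) + (1/2)·ψ(r)^{p} ≤ 0 for every r ≥ r₀. -/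
open MeasureTheory Filter

/-- A function with nonpositive derivative on `[b,∞)` is antitone there. -/
lemma antitoneOn_of_hasDerivAt_nonpos (b : ℝ) (f f' : ℝ → ℝ)
    (hd : ∀ r : ℝ, b ≤ r → HasDerivAt f (f' r) r)
    (hle : ∀ r : ℝ, b ≤ r → f' r ≤ 0) :
    AntitoneOn f (Set.Ici b) := by
  apply antitoneOn_of_deriv_nonpos (convex_Ici b)
  · intro x hx
    exact (hd x hx).continuousAt.continuousWithinAt
  · intro x hx
    rw [interior_Ici] at hx
    exact (hd x hx.le).differentiableAt.differentiableWithinAt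
  · intro x hx
    rw [interior_Ici] at hx
    rw [(hd x hx.le).deriv]
    exact hle x hx.le

/-- Exterior nonexistence in dimension two: there is no positive `C²` function `ψ` on
`[r₀,∞)` satisfying `ψ'' + (1/r) ψ' + (1/2) ψ^p ≤ 0` (for any `p > 0`). -/
theorem exterior_nonexistence_dim_two
    (r₀ p : ℝ) (hr₀ : 0 < r₀) (hp : 0 < p) :
    ¬ ∃ ψ ψ' ψ'' : ℝ → ℝ,
        (∀ r : ℝ, r₀ ≤ r → HasDerivAt ψ (ψ' r) r) ∧
        (∀ r : ℝ, r₀ ≤ r → HasDerivAt ψ' (ψ'' r) r) ∧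
        ContinuousOn ψ'' (Set.Ici r₀) ∧
        (∀ r : ℝ, r₀ ≤ r → 0 < ψ r) ∧
        (∀ r : ℝ, r₀ ≤ r → ψ'' r + (1/r) * ψ' r + (1/2) * ψ r ^ p ≤ 0) := by
  rintro ⟨ψ, ψ', ψ'', hd1, hd2, hcont, hpos, hineq⟩
  -- Basic consequence: multiplied by r, the inequality gives r ψ'' + ψ' ≤ -(r/2) ψ^p.
  have key : ∀ r : ℝ, r₀ ≤ r → r * ψ'' r + ψ' r ≤ -(r / 2) * ψ r ^ p := by
    intro r hr
    have hrpos : 0 < r := lt_of_lt_of_le hr₀ hr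
    have h := mul_le_mul_of_nonneg_left (hineq r hr) hrpos.le
    have hinv : r * ((1 / r) * ψ' r) = ψ' r := by
      field_simp
    nlinarith [h, hinv]
  have hpow_nonneg : ∀ r : ℝ, r₀ ≤ r → 0 ≤ ψ r ^ p := fun r hr =>
    Real.rpow_nonneg (hpos r hr).le p
  -- h(r) = r ψ'(r) is antitone on [r₀,∞).
  have hderiv_h : ∀ r : ℝ, r₀ ≤ r →
      HasDerivAt (fun s => s * ψ' s) (1 * ψ' r + r * ψ'' r) r := by
    intro r hr
    exact (hasDerivAt_id r).mul (hd2 r hr)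
  have hanti_h : AntitoneOn (fun s => s * ψ' s) (Set.Ici r₀) := by
    apply antitoneOn_of_hasDerivAt_nonpos r₀ _ (fun r => 1 * ψ' r + r * ψ'' r) hderiv_h
    intro r hr
    have hrpos : 0 < r := lt_of_lt_of_le hr₀ hr
    have := key r hr
    have := hpow_nonneg r hr
    nlinarith
  by_cases hc : ∀ r : ℝ, r₀ ≤ r → 0 ≤ ψ' r
  · -- Case B: ψ' ≥ 0 everywhere, so ψ ≥ ψ r₀ =: a, and r ψ' becomes negative. Contradiction.
    set a := ψ r₀ with ha_def
    have ha : 0 < a := hpos r₀ le_rfl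
    have hmono : MonotoneOn ψ (Set.Ici r₀) := by
      apply monotoneOn_of_deriv_nonneg (convex_Ici r₀)
      · intro x hx; exact (hd1 x hx).continuousAt.continuousWithinAt
      · intro x hx; rw [interior_Ici] at hx; exact (hd1 x hx.le).differentiableAt.differentiableWithinAt
      · intro x hx; rw [interior_Ici] at hx; rw [(hd1 x hx.le).deriv]; exact hc x hx.le
    have hgea : ∀ r : ℝ, r₀ ≤ r → a ≤ ψ r := fun r hr =>
      hmono Set.self_mem_Ici hr hr
    set K := a ^ p with hK_def
    have hK : 0 < K := Real.rpow_pos_of_pos ha p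
    have hpowK : ∀ r : ℝ, r₀ ≤ r → K ≤ ψ r ^ p := fun r hr =>
      Real.rpow_le_rpow ha.le (hgea r hr) hp.le
    -- g(r) = r ψ'(r) + (K/4)(r² - r₀²) is antitone.
    have hg : AntitoneOn (fun s => s * ψ' s + (K / 4) * (s ^ 2 - r₀ ^ 2)) (Set.Ici r₀) := by
      apply antitoneOn_of_hasDerivAt_nonpos r₀ _
        (fun r => (1 * ψ' r + r * ψ'' r) + (K / 4) * (2 * r))
      · intro r hr
        have := (hderiv_h r hr).add
          (((hasDerivAt_pow 2 r).sub_const (r₀ ^ 2)).const_mul (K / 4))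
        convert this using 1
        · rfl
        · rfl
        · rfl
        push_cast
        ring
      · intro r hr
        have hrpos : 0 < r := lt_of_lt_of_le hr₀ hr
        have h1 := key r hr
        have h2 := hpowK r hr
        nlinarith
    set C := r₀ * ψ' r₀ + (K / 4) * (r₀ ^ 2 - r₀ ^ 2) with hC_def
    set B := 4 * |C| / K + r₀ ^ 2 + 1 with hB_def
    have hB : 0 < B := by positivity
    set R := Real.sqrt B with hR_def
    clear_value R
    have hR2 : R ^ 2 = B := by rw [hR_def]; exact Real.sq_sqrt hB.le
    have hRnn : 0 ≤ R := by rw [hR_def]; exact Real.sqrt_nonneg B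
    have h4 : 0 ≤ 4 * |C| / K := by positivity
    have habs : C ≤ |C| := le_abs_self C
    clear_value C B
    have hRr₀ : r₀ ≤ R := by nlinarith [hR2, h4, hRnn, mul_pos hr₀ hr₀, sq_nonneg (R - r₀), sq_nonneg (R + r₀)]
    have := hg Set.self_mem_Ici hRr₀ hRr₀
    have hC1 : C - (K / 4) * (R ^ 2 - r₀ ^ 2) < 0 := by
      rw [hR2]
      have hB' : B - r₀ ^ 2 = 4 * |C| / K + 1 := by rw [hB_def]; ring
      rw [hB']
      have heq : (K / 4) * (4 * |C| / K + 1) = |C| + K / 4 := by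
        field_simp
      rw [heq]
      linarith [habs]
    have hRψ : 0 ≤ R * ψ' R := mul_nonneg hRnn (hc R hRr₀)
    simp only at this
    nlinarith
  · -- Case A: ψ' is negative somewhere; then ψ decays like c·log r → -∞. Contradiction.
    push_neg at hc
    obtain ⟨r₁, hr₁, hψ'neg⟩ := hc
    have hr₁pos : 0 < r₁ := lt_of_lt_of_le hr₀ hr₁
    set c := r₁ * ψ' r₁ with hc_def
    have hcneg : c < 0 := mul_neg_of_pos_of_neg hr₁pos hψ'neg
    have hbound : ∀ r : ℝ, r₁ ≤ r → r * ψ' r ≤ c :=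
      fun r hr => hanti_h (Set.mem_Ici.mpr hr₁) (Set.mem_Ici.mpr (hr₁.trans hr)) hr
    -- f(r) = ψ(r) - c log r is antitone on [r₁, ∞).
    have hf : AntitoneOn (fun s => ψ s - c * Real.log s) (Set.Ici r₁) := by
      apply antitoneOn_of_hasDerivAt_nonpos r₁ _ (fun r => ψ' r - c * r⁻¹)
      · intro r hr
        have hrpos : 0 < r := lt_of_lt_of_le hr₁pos hr
        exact (hd1 r (hr₁.trans hr)).sub ((Real.hasDerivAt_log hrpos.ne').const_mul c)
      · intro r hr
        have hrpos : 0 < r := lt_of_lt_of_le hr₁pos hr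
        have h1 := hbound r hr
        have : ψ' r ≤ c / r := by
          rw [le_div_iff₀ hrpos]
          linarith [h1]
        rw [div_eq_mul_inv] at this
        linarith
    set R := r₁ * Real.exp (-(ψ r₁ + 1) / c) with hR_def
    have hexp : 0 < Real.exp (-(ψ r₁ + 1) / c) := Real.exp_pos _
    have hexp1 : 1 ≤ Real.exp (-(ψ r₁ + 1) / c) := by
      apply Real.one_le_exp
      have hnum : 0 < ψ r₁ + 1 := by linarith [hpos r₁ hr₁]
      have heq : -(ψ r₁ + 1) / c = (ψ r₁ + 1) / (-c) := by
        rw [div_neg, neg_div]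
      rw [heq]
      exact div_nonneg hnum.le (by linarith)
    have hRr₁ : r₁ ≤ R := le_mul_of_one_le_right hr₁pos.le hexp1
    have hRpos : 0 < R := lt_of_lt_of_le hr₁pos hRr₁
    have hlogR : Real.log R = Real.log r₁ + -(ψ r₁ + 1) / c := by
      rw [hR_def, Real.log_mul hr₁pos.ne' hexp.ne', Real.log_exp]
    have hfin := hf Set.self_mem_Ici (Set.mem_Ici.mpr hRr₁) hRr₁
    simp only at hfin
    have hcancel : c * (-(ψ r₁ + 1) / c) = -(ψ r₁ + 1) := by
      rw [mul_comm]
      exact div_mul_cancel₀ _ hcneg.ne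
    have hψR : ψ R ≤ -1 := by
      rw [hlogR] at hfin
      nlinarith [hfin, hcancel]
    have := hpos R (hr₁.trans hRr₁)
    linarith
end
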